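/- For every Dyck word D, the number of right tunnels of D equals the number of even rises of Ψ(D): rt(D) = er(Ψ(D)). -/
import Mathlib


attribute [local instance] Classical.propDecidable

namespace DyckBij

/-- A word over `Bool` (`true` = up-step `u`, `false` = down-step `d`) is a Dyck word:
equally many `u`'s and `d`'s, and every prefix has at least as many `u`'s as `d`'s. -/
def IsDyck (w : List Bool) : Prop :=
  w.count false = w.count true ∧
    ∀ p : List Bool, p <+: w → p.count false ≤ p.count true

/-- `Matched w i j`: the `u` at (0-indexed) position `i` of `w` is matched (as in matched
parentheses) with the `d` at position `j`, i.e. `w = A u B d C` with `B` a Dyck word,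
`|A| = i` and `j = i + |B| + 1`. -/
def Matched (w : List Bool) (i j : ℕ) : Prop :=
  ∃ A B C : List Bool, IsDyck B ∧ w = A ++ true :: (B ++ false :: C) ∧
    A.length = i ∧ j = i + B.length + 1

/-- Positions `i` and `j` form a matched pair of steps of `w`. -/
def MatchPair (w : List Bool) (i j : ℕ) : Prop :=
  Matched w i j ∨ Matched w j i

/-- The 0-indexed reading order `σ^{(r)}` on a word of length `L`: the first `2r` positions
are read in order, and the remaining positions are read in zigzag
`2r, L-1, 2r+1, L-2, …` (0-indexed). For `r = 0` this is the zigzag order `σ`. -/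
def zigR (r L p : ℕ) : ℕ :=
  if p < 2 * r then p
  else if p % 2 = 0 then p / 2 + r
  else L + r - (p + 1) / 2

/-- The bijection `Ψ_r`: the `p`-th letter of `Ψ_r(w)` is `u` iff the match of the
`σ^{(r)}_p`-th step of `w` does not occur among the previously read steps
`σ^{(r)}_0, …, σ^{(r)}_{p-1}`. -/
noncomputable def psiR (r : ℕ) (w : List Bool) : List Bool :=
  List.ofFn fun p : Fin w.length =>
    if ∃ p' : ℕ, p' < (p : ℕ) ∧
        MatchPair w (zigR r w.length p') (zigR r w.length (p : ℕ))
    then false else true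

/-- The bijection `Ψ = Ψ_0`. -/
noncomputable def psi : List Bool → List Bool := psiR 0

/-- Number of tunnels of `w` with `|A| = |C| + 2r` (midpoint at `x = n + r`),
i.e. decompositions `w = A u B d C` with `B` a Dyck word; tunnels are indexed by `|A|`. -/
noncomputable def tunEq (r : ℕ) (w : List Bool) : ℕ :=
  {i : ℕ | ∃ A B C : List Bool, IsDyck B ∧ w = A ++ true :: (B ++ false :: C) ∧
    A.length = i ∧ A.length = C.length + 2 * r}.ncard

/-- Number of tunnels of `w` with `|A| > |C| + 2r` (midpoint in `x > n + r`). -/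
noncomputable def tunGt (r : ℕ) (w : List Bool) : ℕ :=
  {i : ℕ | ∃ A B C : List Bool, IsDyck B ∧ w = A ++ true :: (B ++ false :: C) ∧
    A.length = i ∧ C.length + 2 * r < A.length}.ncard

/-- Number of tunnels of `w` with `|A| ≤ |C| + 2r` (midpoint in `x ≤ n + r`). -/
noncomputable def tunLe (r : ℕ) (w : List Bool) : ℕ :=
  {i : ℕ | ∃ A B C : List Bool, IsDyck B ∧ w = A ++ true :: (B ++ false :: C) ∧
    A.length = i ∧ A.length ≤ C.length + 2 * r}.ncard

/-- Number of centered tunnels `ct(w)`. -/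
noncomputable def ctun (w : List Bool) : ℕ := tunEq 0 w

/-- Number of right tunnels `rt(w)`. -/
noncomputable def rtun (w : List Bool) : ℕ := tunGt 0 w

/-- Number of left tunnels `lt(w)`: tunnels with `|A| < |C|`. -/
noncomputable def ltun (w : List Bool) : ℕ :=
  {i : ℕ | ∃ A B C : List Bool, IsDyck B ∧ w = A ++ true :: (B ++ false :: C) ∧
    A.length = i ∧ A.length < C.length}.ncard

/-- Number of multitunnels of `w` with `|A| = |C| + 2r` (midpoint at `x = n + r`):
decompositions `w = A B C` with `B` a nonempty Dyck word, indexed by `(|A|, |B|)`. -/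
noncomputable def mtunEq (r : ℕ) (w : List Bool) : ℕ :=
  {q : ℕ × ℕ | ∃ A B C : List Bool, IsDyck B ∧ B ≠ [] ∧ w = A ++ B ++ C ∧
    A.length = q.1 ∧ B.length = q.2 ∧ A.length = C.length + 2 * r}.ncard

/-- Number of centered multitunnels `cmt(w)`. -/
noncomputable def cmtun (w : List Bool) : ℕ := mtunEq 0 w

/-- Number of hills `h(w)`: decompositions `w = X u d Y` with `X, Y` Dyck words. -/
noncomputable def numHills (w : List Bool) : ℕ :=
  {i : ℕ | ∃ X Y : List Bool, IsDyck X ∧ IsDyck Y ∧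
    w = X ++ true :: false :: Y ∧ X.length = i}.ncard

/-- Number of hills of `w` lying in `x > 2r`, i.e. with `|X| ≥ 2r`. -/
noncomputable def numHillsAfter (r : ℕ) (w : List Bool) : ℕ :=
  {i : ℕ | ∃ X Y : List Bool, IsDyck X ∧ IsDyck Y ∧
    w = X ++ true :: false :: Y ∧ X.length = i ∧ 2 * r ≤ X.length}.ncard

/-- Number of arches (equivalently, returns) `ret(w)`: decompositions
`w = X (u B d) Y` with `X, B, Y` Dyck words. -/
noncomputable def numArches (w : List Bool) : ℕ :=
  {i : ℕ | ∃ X B Y : List Bool, IsDyck X ∧ IsDyck B ∧ IsDyck Y ∧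
    w = X ++ true :: (B ++ false :: Y) ∧ X.length = i}.ncard

/-- Number of arches of `w` lying in `x ≥ 2r`, i.e. with `|X| ≥ 2r`. -/
noncomputable def numArchesAfter (r : ℕ) (w : List Bool) : ℕ :=
  {i : ℕ | ∃ X B Y : List Bool, IsDyck X ∧ IsDyck B ∧ IsDyck Y ∧
    w = X ++ true :: (B ++ false :: Y) ∧ X.length = i ∧ 2 * r ≤ X.length}.ncard

/-- Number of odd rises `odr(w)`: `u`-steps at odd 1-indexed positions
(even 0-indexed positions). -/
noncomputable def oddRises (w : List Bool) : ℕ :=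
  {p : ℕ | p < w.length ∧ p % 2 = 0 ∧ w.getD p false = true}.ncard

/-- Number of even rises `er(w)`: `u`-steps at even 1-indexed positions
(odd 0-indexed positions). -/
noncomputable def evenRises (w : List Bool) : ℕ :=
  {p : ℕ | p < w.length ∧ p % 2 = 1 ∧ w.getD p false = true}.ncard

/-- Number of odd rises of `w` at 1-indexed positions `> 2r`. -/
noncomputable def oddRisesAfter (r : ℕ) (w : List Bool) : ℕ :=
  {p : ℕ | p < w.length ∧ p % 2 = 0 ∧ 2 * r ≤ p ∧ w.getD p false = true}.ncard

/-- Number of even rises of `w` at 1-indexed positions `> 2r`. -/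
noncomputable def evenRisesAfter (r : ℕ) (w : List Bool) : ℕ :=
  {p : ℕ | p < w.length ∧ p % 2 = 1 ∧ 2 * r ≤ p ∧ w.getD p false = true}.ncard

/-- Number of `u`-steps of `w` at 1-indexed positions `≤ 2r`. -/
noncomputable def upstepsBefore (r : ℕ) (w : List Bool) : ℕ :=
  {p : ℕ | p < w.length ∧ p < 2 * r ∧ w.getD p false = true}.ncard

/-- Number of peaks of `w`: occurrences of the factor `u d`. -/
noncomputable def numPeaks (w : List Bool) : ℕ :=
  {i : ℕ | i + 2 ≤ w.length ∧ w.getD i false = true ∧ w.getD (i + 1) true = false}.ncard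

/-- Number of occurrences in `w` of a factor of length 3 beginning with `u`
and ending with `d` (occurrences of `u⋆d`). -/
noncomputable def numUStarD (w : List Bool) : ℕ :=
  {i : ℕ | i + 3 ≤ w.length ∧ w.getD i false = true ∧ w.getD (i + 2) true = false}.ncard

/-- `ih(w)`: 1 if `w` begins with the factor `u d`, else 0. -/
noncomputable def initHill (w : List Bool) : ℕ :=
  if w.take 2 = [true, false] then 1 else 0

/-- `fh(w)`: 1 if `w = X u d` with `X` a Dyck word, else 0. -/
noncomputable def finHill (w : List Bool) : ℕ :=
  if ∃ X : List Bool, IsDyck X ∧ w = X ++ [true, false] then 1 else 0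

/-- `π` avoids the pattern 321. -/
def Avoids321 {n : ℕ} (π : Equiv.Perm (Fin n)) : Prop :=
  ¬ ∃ i j k : Fin n, i < j ∧ j < k ∧ π k < π j ∧ π j < π i

/-- `π` avoids the pattern 132. -/
def Avoids132 {n : ℕ} (π : Equiv.Perm (Fin n)) : Prop :=
  ¬ ∃ i j k : Fin n, i < j ∧ j < k ∧ π i < π k ∧ π k < π j

/-- Number of fixed points of `π`. -/
noncomputable def fixedPts {n : ℕ} (π : Equiv.Perm (Fin n)) : ℕ :=
  {i : Fin n | π i = i}.ncard

/-- Number of excedances of `π`. -/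
noncomputable def excedances {n : ℕ} (π : Equiv.Perm (Fin n)) : ℕ :=
  {i : Fin n | i < π i}.ncard

/-- Number of descents of `π`. -/
noncomputable def descents {n : ℕ} (π : Equiv.Perm (Fin n)) : ℕ :=
  {i : ℕ | ∃ (h1 : i < n) (h2 : i + 1 < n), π ⟨i + 1, h2⟩ < π ⟨i, h1⟩}.ncard

/-- `α_r(π) = #{i : π(i) = i + r}` (stated 0-indexed, equivalent to the 1-indexed version). -/
noncomputable def alphaStat {n : ℕ} (r : ℕ) (π : Equiv.Perm (Fin n)) : ℕ :=
  {i : Fin n | (π i : ℕ) = (i : ℕ) + r}.ncard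

/-- `β_r(π) = #{i : i > r, π(i) = i}` (for 1-indexed `i`; 0-indexed this is `r ≤ i`). -/
noncomputable def betaStat {n : ℕ} (r : ℕ) (π : Equiv.Perm (Fin n)) : ℕ :=
  {i : Fin n | r ≤ (i : ℕ) ∧ π i = i}.ncard

/-- Height function. -/
def Ht (w : List Bool) (i : ℕ) : ℤ :=
  ((w.take i).count true : ℤ) - ((w.take i).count false : ℤ)

lemma Ht_zero (w : List Bool) : Ht w 0 = 0 := by simp [Ht]

lemma Ht_stable (w : List Bool) {i : ℕ} (h : w.length ≤ i) : Ht w i = Ht w w.length := by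
  simp [Ht, List.take_of_length_le h, List.take_length]

lemma Ht_succ (w : List Bool) (i : ℕ) (h : i < w.length) :
    Ht w (i+1) = Ht w i + (if w.getD i false = true then 1 else -1) := by
  have ht : w.take (i+1) = w.take i ++ [w[i]] := by
    rw [List.take_succ, List.getElem?_eq_getElem h]; rfl
  have hd : w.getD i false = w[i] := by
    rw [List.getD_eq_getElem?_getD, List.getElem?_eq_getElem h]; rfl
  rw [hd]
  cases hwi : w[i] <;> simp [Ht, ht, List.count_append, hwi] <;> push_cast <;> ring

lemma Ht_succ_true (w : List Bool) (i : ℕ) (h : i < w.length) (hw : w.getD i false = true) :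
    Ht w (i+1) = Ht w i + 1 := by rw [Ht_succ w i h, if_pos hw]

lemma Ht_succ_false (w : List Bool) (i : ℕ) (h : i < w.length) (hw : w.getD i false = false) :
    Ht w (i+1) = Ht w i - 1 := by
  rw [Ht_succ w i h, if_neg (by rw [hw]; simp)]; ring

lemma Ht_step_abs (w : List Bool) (i : ℕ) : (Ht w (i+1) - Ht w i).natAbs ≤ 1 := by
  rcases lt_or_ge i w.length with h | h
  · rw [Ht_succ w i h]; split <;> simp
  · rw [Ht_stable w h, Ht_stable w (by omega)]; simp

/-- Segment characterization of Dyck. -/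
lemma isDyck_seg_iff (w : List Bool) (a b : ℕ) (hab : a ≤ b) (hb : b ≤ w.length) :
    IsDyck ((w.drop a).take (b - a)) ↔
      Ht w b = Ht w a ∧ ∀ k, a ≤ k → k ≤ b → Ht w a ≤ Ht w k := by
  set B := (w.drop a).take (b - a) with hB
  have hlen : B.length = b - a := by
    simp [hB, List.length_take, List.length_drop]; omega
  have key : ∀ t, t ≤ b - a → w.take (a + t) = w.take a ++ B.take t := by
    intro t ht
    rw [List.take_add]
    congr 1
    rw [hB, List.take_take, min_eq_left ht]
  constructor
  · rintro ⟨h1, h2⟩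
    constructor
    · have := key (b - a) le_rfl
      rw [Nat.add_sub_cancel' hab] at this
      have hBt : B.take (b - a) = B := by rw [← hlen, List.take_length]
      rw [hBt] at this
      simp only [Ht, this, List.count_append]
      push_cast; omega
    · intro k hak hkb
      have h3 := h2 (B.take (k - a)) (List.take_prefix _ _)
      have := key (k - a) (by omega)
      rw [Nat.add_sub_cancel' hak] at this
      simp only [Ht, this, List.count_append]
      push_cast at h3 ⊢; omega
  · rintro ⟨h1, h2⟩
    constructor
    · have := key (b - a) le_rfl
      rw [Nat.add_sub_cancel' hab] at this
      have hBt : B.take (b - a) = B := by rw [← hlen, List.take_length]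
      rw [hBt] at this
      have : Ht w b = Ht w a + ((B.count true : ℤ) - B.count false) := by
        simp only [Ht, this, List.count_append]; push_cast; ring
      omega
    · intro p hp
      rw [List.prefix_iff_eq_take] at hp
      have hpl : p.length ≤ b - a := by
        have := List.length_take_le p.length B  -- p = B.take p.length havs length ≤ ...
        calc p.length = (B.take p.length).length := by rw [← hp]
          _ ≤ B.length := by rw [List.length_take]; omega
          _ = b - a := hlen
      have hk := h2 (a + p.length) (by omega) (by omega)
      have := key p.length hpl
      rw [← hp] at this
      simp only [Ht, this, List.count_append] at hk
      push_cast at hk ⊢; omega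

lemma isDyck_iff_Ht (w : List Bool) :
    IsDyck w ↔ Ht w w.length = 0 ∧ ∀ k, k ≤ w.length → 0 ≤ Ht w k := by
  have := isDyck_seg_iff w 0 w.length (Nat.zero_le _) le_rfl
  simp only [List.drop_zero, Nat.sub_zero, List.take_length, Ht_zero] at this
  rw [this]
  constructor <;> rintro ⟨h1, h2⟩
  · exact ⟨h1, fun k hk => h2 k (by omega) hk⟩
  · exact ⟨h1, fun k _ hk => h2 k hk⟩

lemma getD_eq (w : List Bool) (i : ℕ) (h : i < w.length) : w.getD i false = w[i] := by
  rw [List.getD_eq_getElem?_getD, List.getElem?_eq_getElem h]; rfl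

/-- Height characterization of `Matched`. -/
lemma matched_iff (w : List Bool) (i j : ℕ) :
    Matched w i j ↔
      i < j ∧ j < w.length ∧ w.getD i false = true ∧ w.getD j false = false ∧
      Ht w j = Ht w (i+1) ∧ ∀ k, i + 1 ≤ k → k ≤ j → Ht w (i+1) ≤ Ht w k := by
  constructor
  · rintro ⟨A, B, C, hB, hw, hA, hj⟩
    have hL : w.length = A.length + B.length + C.length + 2 := by
      subst hw; simp; omega
    have hij : i < j := by omega
    have hjL : j < w.length := by omega
    have hgi : w.getD i false = true := by
      rw [List.getD_eq_getElem?_getD, hw, ← hA,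
        List.getElem?_append_right (le_refl A.length)]
      simp
    have hw2 : w = (A ++ true :: B) ++ false :: C := by rw [hw]; simp
    have hj2 : j = (A ++ true :: B).length := by simp [hj, ← hA]; omega
    have hgj : w.getD j false = false := by
      rw [List.getD_eq_getElem?_getD, hw2, hj2,
        List.getElem?_append_right (le_refl _)]
      simp
    have hdrop : (w.drop (i+1)).take (j - (i+1)) = B := by
      have h1 : w = (A ++ [true]) ++ (B ++ false :: C) := by rw [hw]; simp
      have h2 : w.drop (i+1) = B ++ false :: C := by
        rw [h1]
        have : i + 1 = (A ++ [true]).length := by simp [← hA]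
        rw [this, List.drop_left]
      rw [h2]
      have : j - (i+1) = B.length := by omega
      rw [this, List.take_left]
    have := (isDyck_seg_iff w (i+1) j (by omega) (by omega)).mp (hdrop ▸ hB)
    exact ⟨hij, hjL, hgi, hgj, this.1, this.2⟩
  · rintro ⟨hij, hjL, hgi, hgj, h1, h2⟩
    refine ⟨w.take i, (w.drop (i+1)).take (j - (i+1)), w.drop (j+1), ?_, ?_, ?_, ?_⟩
    · exact (isDyck_seg_iff w (i+1) j (by omega) (by omega)).mpr ⟨h1, h2⟩
    · have e1 : w = w.take i ++ w.drop i := (List.take_append_drop i w).symm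
      have e2 : w.drop i = true :: w.drop (i+1) := by
        rw [List.drop_eq_getElem_cons (by omega : i < w.length)]
        rw [getD_eq w i (by omega)] at hgi
        rw [hgi]
      have e3 : w.drop (i+1) = (w.drop (i+1)).take (j - (i+1)) ++ (w.drop (i+1)).drop (j - (i+1)) := (List.take_append_drop _ _).symm
      have e4 : (w.drop (i+1)).drop (j - (i+1)) = w.drop j := by
        rw [List.drop_drop]; congr 1; omega
      have e5 : w.drop j = false :: w.drop (j+1) := by
        rw [List.drop_eq_getElem_cons hjL]
        rw [getD_eq w j hjL] at hgj
        rw [hgj]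
      conv_lhs => rw [e1, e2, e3, e4, e5]
    · rw [List.length_take, min_eq_left (by omega)]
    · rw [List.length_take, List.length_drop, min_eq_left (by omega)]; omega

lemma matched_lt {w : List Bool} {i j : ℕ} (h : Matched w i j) : i < j ∧ j < w.length :=
  ⟨((matched_iff w i j).mp h).1, ((matched_iff w i j).mp h).2.1⟩

lemma matched_getD {w : List Bool} {i j : ℕ} (h : Matched w i j) :
    w.getD i false = true ∧ w.getD j false = false :=
  ⟨((matched_iff w i j).mp h).2.2.1, ((matched_iff w i j).mp h).2.2.2.1⟩

lemma matched_unique_left {w : List Bool} {i i' j : ℕ}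
    (h : Matched w i j) (h' : Matched w i' j) : i = i' := by
  rw [matched_iff] at h h'
  by_contra hne
  -- wlog i < i'
  rcases Nat.lt_or_ge i i' with hlt | hge
  · -- i < i' < j ; Ht w (i'+1) = Ht w j = Ht w (i+1); Ht w i' ≥ Ht w (i+1)
    have hx := h.2.2.2.2.2 i' (by omega) (by omega)
    have hstep := Ht_succ_true w i' (by omega) h'.2.2.1
    omega
  · have hlt : i' < i := by omega
    have hx := h'.2.2.2.2.2 i (by omega) (by omega)
    have hstep := Ht_succ_true w i (by omega) h.2.2.1
    omega

lemma matched_unique_right {w : List Bool} {i j j' : ℕ}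
    (h : Matched w i j) (h' : Matched w i j') : j = j' := by
  rw [matched_iff] at h h'
  by_contra hne
  rcases Nat.lt_or_ge j j' with hlt | hlt
  · have hx := h'.2.2.2.2.2 (j+1) (by omega) (by omega)
    have hstep := Ht_succ_false w j (by omega) h.2.2.2.1
    omega
  · have hlt : j' < j := by omega
    have hx := h.2.2.2.2.2 (j'+1) (by omega) (by omega)
    have hstep := Ht_succ_false w j' (by omega) h'.2.2.2.1
    omega

lemma ivt_up (f : ℕ → ℤ) (hf : ∀ k, (f (k+1) - f k).natAbs ≤ 1)
    {a b : ℕ} {V : ℤ} (hab : a ≤ b) (ha : f a ≤ V) (hb : V < f b) :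
    ∃ i, a ≤ i ∧ i ≤ b ∧ f i = V := by
  classical
  have hne : ∃ k, a ≤ k ∧ V < f k := ⟨b, hab, hb⟩
  obtain ⟨hai0, hVi0⟩ := Nat.find_spec hne
  set i0 := Nat.find hne with hi0
  have hi0b : i0 ≤ b := Nat.find_min' hne ⟨hab, hb⟩
  have hi0a : a < i0 := by
    rcases Nat.lt_or_ge a i0 with h | h
    · exact h
    · exfalso; have : i0 = a := by omega
      rw [this] at hVi0; omega
  have hprev : ¬ (a ≤ i0 - 1 ∧ V < f (i0 - 1)) := Nat.find_min hne (by omega)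
  have hfa : f (i0 - 1) ≤ V := by
    by_contra h; exact hprev ⟨by omega, by omega⟩
  have hstep := hf (i0 - 1)
  have hi0e : i0 - 1 + 1 = i0 := by omega
  rw [hi0e] at hstep
  refine ⟨i0 - 1, by omega, by omega, by omega⟩

lemma ivt_down (f : ℕ → ℤ) (hf : ∀ k, (f (k+1) - f k).natAbs ≤ 1)
    {a b : ℕ} {V : ℤ} (hab : a ≤ b) (ha : V < f a) (hb : f b ≤ V) :
    ∃ i, a ≤ i ∧ i ≤ b ∧ f i = V := by
  classical
  have hne : ∃ k, a ≤ k ∧ f k ≤ V := ⟨b, hab, hb⟩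
  obtain ⟨hai0, hVi0⟩ := Nat.find_spec hne
  set i0 := Nat.find hne with hi0
  have hi0b : i0 ≤ b := Nat.find_min' hne ⟨hab, hb⟩
  have hi0a : a < i0 := by
    rcases Nat.lt_or_ge a i0 with h | h
    · exact h
    · exfalso; have : i0 = a := by omega
      rw [this] at hVi0; omega
  have hprev : ¬ (a ≤ i0 - 1 ∧ f (i0 - 1) ≤ V) := Nat.find_min hne (by omega)
  have hfa : V < f (i0 - 1) := by
    by_contra h; exact hprev ⟨by omega, by omega⟩
  have hstep := hf (i0 - 1)
  have hi0e : i0 - 1 + 1 = i0 := by omega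
  rw [hi0e] at hstep
  refine ⟨i0, by omega, by omega, by omega⟩

lemma dyck_Ht_nonneg {w : List Bool} (hD : IsDyck w) (k : ℕ) : 0 ≤ Ht w k := by
  rcases Nat.lt_or_ge k w.length with h | h
  · exact ((isDyck_iff_Ht w).mp hD).2 k (by omega)
  · rw [Ht_stable w h]; exact ((isDyck_iff_Ht w).mp hD).2 _ le_rfl

lemma dyck_Ht_length {w : List Bool} (hD : IsDyck w) : Ht w w.length = 0 :=
  ((isDyck_iff_Ht w).mp hD).1

/-- Every `d`-step of a Dyck word is matched by a `u`-step. -/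
lemma exists_match_of_false {w : List Bool} (hD : IsDyck w) {j : ℕ}
    (hj : j < w.length) (hgj : w.getD j false = false) : ∃ i, Matched w i j := by
  classical
  set V := Ht w (j+1) with hV
  have hVj : Ht w j = V + 1 := by
    have := Ht_succ_false w j hj hgj; omega
  have hV0 : 0 ≤ V := hV ▸ dyck_Ht_nonneg hD (j+1)
  -- there exists i ≤ j with Ht w i = V
  have hne : ∃ i, Ht w i = V ∧ i ≤ j := by
    obtain ⟨i, _, hi2, hi3⟩ := ivt_up (Ht w) (Ht_step_abs w) (a := 0) (b := j) (V := V)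
      (Nat.zero_le j) (by rw [Ht_zero]; exact hV0) (by omega)
    exact ⟨i, hi3, hi2⟩
  set m := Nat.findGreatest (fun i => Ht w i = V) j with hm
  obtain ⟨i0, hi01, hi02⟩ := hne
  have hmspec : Ht w m = V := Nat.findGreatest_spec (P := fun i => Ht w i = V) hi02 hi01
  have hmj : m ≤ j := Nat.findGreatest_le j
  have hmax : ∀ k, m < k → k ≤ j → Ht w k ≠ V := fun k h1 h2 =>
    Nat.findGreatest_is_greatest (P := fun i => Ht w i = V) h1 h2
  have hmltj : m < j := by
    rcases Nat.lt_or_ge m j with h | h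
    · exact h
    · exfalso; have he : m = j := by omega
      rw [he] at hmspec; omega
  have hup : ∀ k, m < k → k ≤ j → V + 1 ≤ Ht w k := by
    intro k h1 h2
    by_contra hcon
    push_neg at hcon
    have hkV : Ht w k ≤ V - 1 := by have := hmax k h1 h2; omega
    obtain ⟨i, ha, hb, hc⟩ := ivt_up (Ht w) (Ht_step_abs w) (a := k) (b := j) (V := V)
      (by omega) (by omega) (by omega)
    exact hmax i (by omega) hb hc
  have hm1 : Ht w (m+1) = V + 1 := by
    have h1 := hup (m+1) (by omega) (by omega)
    have h2 := Ht_step_abs w m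
    omega
  have hgm : w.getD m false = true := by
    by_cases hmL : m < w.length
    · rcases Bool.eq_false_or_eq_true (w.getD m false) with h | h
      · exact h
      · have := Ht_succ_false w m hmL h; omega
    · exfalso
      rw [Ht_stable w (by omega : w.length ≤ m + 1), ← Ht_stable w (by omega : w.length ≤ m)] at hm1
      omega
  refine ⟨m, (matched_iff w m j).mpr ⟨hmltj, hj, hgm, hgj, by omega, ?_⟩⟩
  intro k h1 h2
  have := hup k (by omega) h2
  omega

/-- Every `u`-step of a Dyck word is matched by a `d`-step. -/
lemma exists_match_of_true {w : List Bool} (hD : IsDyck w) {i : ℕ}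
    (hi : i < w.length) (hgi : w.getD i false = true) : ∃ j, Matched w i j := by
  classical
  set V := Ht w i with hV
  have hi1 : Ht w (i+1) = V + 1 := Ht_succ_true w i hi hgi
  have hV0 : 0 ≤ V := hV ▸ dyck_Ht_nonneg hD i
  have hne : ∃ k, i + 1 ≤ k ∧ Ht w k = V := by
    obtain ⟨k, h1, h2, h3⟩ := ivt_down (Ht w) (Ht_step_abs w) (a := i+1) (b := w.length)
      (V := V) (by omega) (by omega) (by rw [dyck_Ht_length hD]; omega)
    exact ⟨k, h1, h3⟩
  obtain ⟨hj1a, hj1b⟩ := Nat.find_spec hne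
  set j1 := Nat.find hne with hj1
  have hmin : ∀ k, i + 1 ≤ k → k < j1 → Ht w k ≠ V := by
    intro k h1 h2 h3
    exact Nat.find_min hne h2 ⟨h1, h3⟩
  have hup : ∀ k, i + 1 ≤ k → k < j1 → V + 1 ≤ Ht w k := by
    intro k h1 h2
    by_contra hcon
    push_neg at hcon
    have hkV : Ht w k ≤ V - 1 := by have := hmin k h1 h2; omega
    obtain ⟨i', ha, hb, hc⟩ := ivt_down (Ht w) (Ht_step_abs w) (a := i+1) (b := k) (V := V)
      (by omega) (by omega) (by omega)
    exact hmin i' ha (by omega) hc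
  have hj1i : i + 1 < j1 := by
    rcases Nat.lt_or_ge (i+1) j1 with h | h
    · exact h
    · exfalso; have he : j1 = i + 1 := by omega
      rw [he] at hj1b; omega
  set j := j1 - 1 with hjd
  have hjj1 : j + 1 = j1 := by omega
  have hjV : Ht w j = V + 1 := by
    have h1 := hup j (by omega) (by omega)
    have h2 := Ht_step_abs w j
    rw [hjj1] at h2
    omega
  have hjL : j < w.length := by
    by_contra h
    push_neg at h
    have e1 := Ht_stable w h
    have e2 := Ht_stable w (by omega : w.length ≤ j + 1)
    rw [hjj1] at e2
    omega
  have hgj : w.getD j false = false := by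
    rcases Bool.eq_false_or_eq_true (w.getD j false) with h | h
    · have := Ht_succ_true w j hjL h
      rw [hjj1] at this; omega
    · exact h
  refine ⟨j, (matched_iff w i j).mpr ⟨by omega, hjL, hgi, hgj, by omega, ?_⟩⟩
  intro k h1 h2
  rcases Nat.lt_or_ge k j1 with h | h
  · have := hup k h1 h
    omega
  · have he : k = j1 := by omega
    omega

lemma matchPair_unique {w : List Bool} {p q q' : ℕ}
    (h : MatchPair w p q) (h' : MatchPair w p q') : q = q' := by
  rcases h with h | h <;> rcases h' with h' | h'
  · exact matched_unique_right h h'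
  · have := (matched_getD h).1
    have := (matched_getD h').2
    simp_all
  · have := (matched_getD h).2
    have := (matched_getD h').1
    simp_all
  · exact matched_unique_left h h'

lemma exists_matchPair {w : List Bool} (hD : IsDyck w) {p : ℕ} (hp : p < w.length) :
    ∃ q, MatchPair w p q := by
  rcases Bool.eq_false_or_eq_true (w.getD p false) with h | h
  · obtain ⟨j, hj⟩ := exists_match_of_true hD hp h
    exact ⟨j, Or.inl hj⟩
  · obtain ⟨i, hi⟩ := exists_match_of_false hD hp h
    exact ⟨i, Or.inr hi⟩

lemma zig0_even (L p : ℕ) (h : p % 2 = 0) : zigR 0 L p = p / 2 := by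
  simp [zigR, h]

lemma zig0_odd (L p : ℕ) (h : p % 2 = 1) : zigR 0 L p = L - (p + 1) / 2 := by
  simp [zigR, h]

lemma psi_length (D : List Bool) : (psi D).length = D.length := by
  simp [psi, psiR]

lemma psi_getD (D : List Bool) {p : ℕ} (hp : p < D.length) :
    (psi D).getD p false =
      if ∃ p' : ℕ, p' < p ∧ MatchPair D (zigR 0 D.length p') (zigR 0 D.length p)
      then false else true := by
  rw [List.getD_eq_getElem?_getD]
  unfold psi psiR
  rw [List.getElem?_ofFn]
  simp only [List.ofFnNthVal, hp, dif_pos]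
  rfl

/-- for every Dyck word `D`, `rt(D) = er(Ψ(D))`. -/
theorem rtun_eq_evenRises_psi (D : List Bool) (hD : IsDyck D) :
    rtun D = evenRises (psi D) := by
  classical
  set L := D.length with hL
  set T : Set (ℕ × ℕ) := {q | Matched D q.1 q.2 ∧ L ≤ q.1 + q.2} with hT
  have hS1 : {i : ℕ | ∃ A B C : List Bool, IsDyck B ∧ D = A ++ true :: (B ++ false :: C) ∧
      A.length = i ∧ C.length + 2 * 0 < A.length} = Prod.fst '' T := by
    ext i
    constructor
    · rintro ⟨A, B, C, hB, hw, hA, hC⟩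
      have hlen : L = A.length + B.length + C.length + 2 := by
        rw [hL, hw]; simp; omega
      refine ⟨(i, i + B.length + 1), ⟨⟨A, B, C, hB, hw, hA, rfl⟩, by omega⟩, rfl⟩
    · rintro ⟨⟨m, j⟩, ⟨hM, hle⟩, rfl⟩
      obtain ⟨A, B, C, hB, hw, hA, hj⟩ := hM
      have hlen : L = A.length + B.length + C.length + 2 := by
        rw [hL, hw]; simp; omega
      exact ⟨A, B, C, hB, hw, hA, by omega⟩
  have hS2 : {p : ℕ | p < (psi D).length ∧ p % 2 = 1 ∧ (psi D).getD p false = true} =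
      (fun q : ℕ × ℕ => 2 * (L - q.2) - 1) '' T := by
    ext p
    constructor
    · rintro ⟨hp1, hp2, hp3⟩
      rw [psi_length] at hp1
      set k := (p + 1) / 2 with hk
      have hpk : p = 2 * k - 1 ∧ 1 ≤ k := by omega
      have h2k : 2 * k ≤ L := by omega
      rw [psi_getD D hp1] at hp3
      have hcond : ¬ ∃ p' : ℕ, p' < p ∧ MatchPair D (zigR 0 L p') (zigR 0 L p) := by
        intro hcon
        rw [if_pos hcon] at hp3
        exact Bool.false_ne_true hp3
      have hzp : zigR 0 L p = L - k := zig0_odd L p hp2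
      obtain ⟨q, hq⟩ := exists_matchPair hD (show L - k < D.length by omega)
      rcases hq with hq | hq
      · exfalso
        obtain ⟨hlt1, hlt2⟩ := matched_lt hq
        set t := L - q with ht
        have htb : 1 ≤ t ∧ t < k := by omega
        refine hcond ⟨2 * t - 1, by omega, ?_⟩
        have hz' : zigR 0 L (2 * t - 1) = q := by
          rw [zig0_odd L _ (by omega)]
          omega
        rw [hz', hzp]
        exact Or.inr hq
      · obtain ⟨hlt1, hlt2⟩ := matched_lt hq
        by_cases hqk : q < k
        · exfalso
          refine hcond ⟨2 * q, by omega, ?_⟩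
          have hz' : zigR 0 L (2 * q) = q := by
            rw [zig0_even L _ (by omega)]
            omega
          rw [hz', hzp]
          exact Or.inl hq
        · refine ⟨(q, L - k), ⟨hq, by omega⟩, by simp; omega⟩
    · rintro ⟨⟨m, j⟩, ⟨hM, hle⟩, rfl⟩
      obtain ⟨hmj, hjL⟩ := matched_lt hM
      set k := L - j with hk
      have hk1 : 1 ≤ k := by omega
      have hkm : k ≤ m := by omega
      have h2k : 2 * k < L := by omega
      simp only [Set.mem_setOf_eq]
      have hp : 2 * (L - j) - 1 = 2 * k - 1 := by omega
      rw [hp]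
      refine ⟨by rw [psi_length]; omega, by omega, ?_⟩
      rw [psi_getD D (by omega)]
      rw [if_neg ?_]
      intro ⟨p', hp', hmp⟩
      have hzp : zigR 0 L (2 * k - 1) = j := by
        rw [zig0_odd L _ (by omega)]
        omega
      rw [hzp] at hmp
      rcases Nat.even_or_odd p' with he | ho
      · have he2 : p' % 2 = 0 := Nat.even_iff.mp he
        have hz' : zigR 0 L p' = p' / 2 := zig0_even L p' he2
        rw [hz'] at hmp
        have hlt : p' / 2 < k := by omega
        rcases hmp with hmp | hmp
        · have := matched_unique_left hmp hM
          omega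
        · have h1 := (matched_getD hmp).1
          have h2 := (matched_getD hM).2
          simp_all
      · have ho2 : p' % 2 = 1 := Nat.odd_iff.mp ho
        have hz' : zigR 0 L p' = L - (p' + 1) / 2 := zig0_odd L p' ho2
        rw [hz'] at hmp
        have hlt : 1 ≤ (p' + 1) / 2 ∧ (p' + 1) / 2 < k := by omega
        have hgt : j < L - (p' + 1) / 2 := by omega
        rcases hmp with hmp | hmp
        · have := (matched_lt hmp).1
          omega
        · have h1 := (matched_getD hmp).1
          have h2 := (matched_getD hM).2
          simp_all
  have hinj1 : Set.InjOn Prod.fst T := by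
    rintro ⟨m, j⟩ hq ⟨m', j'⟩ hq' he
    simp only [hT, Set.mem_setOf_eq] at hq hq'
    simp only at he
    subst he
    have := matched_unique_right hq.1 hq'.1
    simp [this]
  have hinj2 : Set.InjOn (fun q : ℕ × ℕ => 2 * (L - q.2) - 1) T := by
    rintro ⟨m, j⟩ hq ⟨m', j'⟩ hq' he
    simp only [hT, Set.mem_setOf_eq] at hq hq'
    simp only at he
    have h1 := matched_lt hq.1
    have h2 := matched_lt hq'.1
    have hjj : j = j' := by omega
    subst hjj
    have := matched_unique_left hq.1 hq'.1
    simp [this]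
  show tunGt 0 D = evenRises (psi D)
  rw [tunGt, evenRises, hS1, hS2, Set.ncard_image_of_injOn hinj1,
    Set.ncard_image_of_injOn hinj2]


end DyckBij
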